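/- Let N = mk + 1 be prime with m ≥ 2 and x a generator of Z_N^×. If X₀ = {x^{jm} : 0 ≤ j ≤ k-1} satisfies X₀ + X₀ = Z_N \ X₀ and X₀ + Xᵢ = Z_N \ {0} for all 1 ≤ i ≤ m-1 (where Xᵢ = x^i·X₀), then the partition X₀, ..., X_{m-1} of Z_N \ {0} satisfies: every Xᵢ is a sum-free cyclic basis, and Xᵢ + Xⱼ = Z_N \ {0} for all i ≠ j. -/
import Mathlib


open Pointwise

theorem single_generator_SSFCMB (m k : ℕ) (hm : 2 ≤ m) (hk : 0 < k)
    (hN : Nat.Prime (m * k + 1)) (x : (ZMod (m * k + 1))ˣ)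
    (hx : ∀ u : (ZMod (m * k + 1))ˣ, u ∈ Subgroup.zpowers x) :
    let X : ℕ → Set (ZMod (m * k + 1)) :=
      fun i => {a : ZMod (m * k + 1) | ∃ j < k, a = (x : ZMod (m * k + 1)) ^ (j * m + i)}
    (X 0 + X 0 = Set.univ \ X 0) →
    (∀ i, 1 ≤ i → i ≤ m - 1 → X 0 + X i = Set.univ \ {0}) →
      (∀ i j, i < m → j < m → i ≠ j → X i ∩ X j = ∅) ∧
      (⋃ i ∈ Finset.range m, X i) = Set.univ \ {0} ∧
      (∀ i, i < m → (X i + X i) ∩ X i = ∅) ∧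
      (∀ i, i < m → (X i + X i) ∪ X i = Set.univ) ∧
      (∀ i j, i < m → j < m → i ≠ j → X i + X j = Set.univ \ {0}) := by
  intro X h1 h2
  haveI : Fact (Nat.Prime (m * k + 1)) := ⟨hN⟩
  have hmpos : 0 < m := by omega
  have hmk : 0 < m * k := Nat.mul_pos hmpos hk
  have hord : orderOf x = m * k := by
    rw [orderOf_eq_card_of_forall_mem_zpowers hx, Nat.card_eq_fintype_card,
      ZMod.card_units_eq_totient, Nat.totient_prime hN]
    omega
  -- bound: j * m + i < m * k when j < k, i < m
  have hbound : ∀ j i : ℕ, j < k → i < m → j * m + i < m * k := by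
    intro j i hj hi
    calc j * m + i < (j + 1) * m := by rw [add_mul, one_mul]; omega
    _ ≤ k * m := Nat.mul_le_mul_right m (by omega)
    _ = m * k := Nat.mul_comm k m
  -- shift lemma
  have hshift : ∀ i d : ℕ, X (d + i) = (x ^ i : (ZMod (m * k + 1))ˣ) • X d := by
    intro i d
    ext a
    simp only [Set.mem_smul_set, Set.mem_setOf_eq, X]
    constructor
    · rintro ⟨j, hj, rfl⟩
      refine ⟨(x : ZMod (m * k + 1)) ^ (j * m + d), ⟨j, hj, rfl⟩, ?_⟩
      simp only [Units.smul_def, Units.val_pow_eq_pow_val, smul_eq_mul, ← pow_add]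
      congr 1
      omega
    · rintro ⟨b, ⟨j, hj, rfl⟩, rfl⟩
      refine ⟨j, hj, ?_⟩
      simp only [Units.smul_def, Units.val_pow_eq_pow_val, smul_eq_mul, ← pow_add]
      congr 1
      omega
  have hX0 : ∀ i : ℕ, X i = (x ^ i : (ZMod (m * k + 1))ˣ) • X 0 := by
    intro i
    have := hshift i 0
    rwa [Nat.zero_add] at this
  -- smul distributes over set addition
  have hsmul_add : ∀ (u : (ZMod (m * k + 1))ˣ) (A B : Set (ZMod (m * k + 1))),
      u • (A + B) = u • A + u • B := by
    intro u A B
    ext c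
    simp only [Set.mem_smul_set, Set.mem_add]
    constructor
    · rintro ⟨d, ⟨a, ha, b, hb, rfl⟩, rfl⟩
      exact ⟨u • a, ⟨a, ha, rfl⟩, u • b, ⟨b, hb, rfl⟩, (smul_add u a b).symm⟩
    · rintro ⟨_, ⟨a, ha, rfl⟩, _, ⟨b, hb, rfl⟩, rfl⟩
      exact ⟨a + b, ⟨a, ha, b, hb, rfl⟩, smul_add u a b⟩
  -- X i + X i = univ \ X i
  have key_ii : ∀ i : ℕ, X i + X i = Set.univ \ X i := by
    intro i
    rw [hX0 i, ← hsmul_add, h1, Set.smul_set_sdiff, Set.smul_set_univ]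
  -- X i + X j = univ \ {0} for i < j < m
  have key_lt : ∀ i j : ℕ, i < j → j < m → X i + X j = Set.univ \ {0} := by
    intro i j hij hj
    have h1le : 1 ≤ j - i := by omega
    have h2le : j - i ≤ m - 1 := by omega
    have hXj : X j = (x ^ i : (ZMod (m * k + 1))ˣ) • X (j - i) := by
      have := hshift i (j - i)
      rwa [show j - i + i = j by omega] at this
    rw [hX0 i, hXj, ← hsmul_add, h2 (j - i) h1le h2le, Set.smul_set_sdiff,
      Set.smul_set_univ, Set.smul_set_singleton, smul_zero]
  refine ⟨?_, ?_, ?_, ?_, ?_⟩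
  · -- disjointness
    intro i j hi hj hne
    ext a
    simp only [Set.mem_inter_iff, Set.mem_empty_iff_false, iff_false, not_and]
    rintro ⟨j1, hj1, rfl⟩ ⟨j2, hj2, heq⟩
    have hu : x ^ (j1 * m + i) = x ^ (j2 * m + j) := by
      apply Units.ext
      rw [Units.val_pow_eq_pow_val, Units.val_pow_eq_pow_val]
      exact heq
    have hmod := pow_eq_pow_iff_modEq.mp hu
    rw [hord] at hmod
    have heq2 : j1 * m + i = j2 * m + j :=
      (Nat.ModEq.eq_of_lt_of_lt hmod (hbound j1 i hj1 hi) (hbound j2 j hj2 hj))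
    have : i = j := by
      have h1 : (j1 * m + i) % m = i := by
        rw [Nat.add_comm, Nat.add_mul_mod_self_right, Nat.mod_eq_of_lt hi]
      have h2 : (j2 * m + j) % m = j := by
        rw [Nat.add_comm, Nat.add_mul_mod_self_right, Nat.mod_eq_of_lt hj]
      rw [← h1, ← h2, heq2]
    exact hne this
  · -- union
    ext a
    simp only [Set.mem_iUnion, Finset.mem_range, Set.mem_diff, Set.mem_univ,
      Set.mem_singleton_iff, true_and, Set.mem_setOf_eq, X]
    constructor
    · rintro ⟨i, hi, j, hj, rfl⟩
      rw [← Units.val_pow_eq_pow_val]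
      exact Units.ne_zero _
    · intro ha
      obtain ⟨u, hu⟩ := isUnit_iff_ne_zero.mpr ha
      obtain ⟨n, hn⟩ := mem_powers_iff_mem_zpowers.mpr (hx u)
      have htlt : n % (m * k) < m * k := Nat.mod_lt n hmk
      have hxt : x ^ (n % (m * k)) = u := by
        have h' : x ^ (n % orderOf x) = u := by rw [pow_mod_orderOf]; exact hn
        rwa [hord] at h'
      refine ⟨n % (m * k) % m, Nat.mod_lt _ hmpos, n % (m * k) / m, ?_, ?_⟩
      · rw [Nat.div_lt_iff_lt_mul hmpos]
        calc n % (m * k) < m * k := htlt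
        _ = k * m := Nat.mul_comm m k
      · rw [show n % (m * k) / m * m + n % (m * k) % m = n % (m * k) from by
          rw [Nat.mul_comm]; exact Nat.div_add_mod _ m]
        rw [← hu, ← hxt, Units.val_pow_eq_pow_val]
  · -- sum-free
    intro i _
    rw [key_ii i]
    exact Set.diff_inter_self
  · -- cyclic basis
    intro i _
    rw [key_ii i, Set.diff_union_self, Set.univ_union]
  · -- cross sums
    intro i j hi hj hne
    rcases Nat.lt_or_ge i j with h | h
    · exact key_lt i j h hj
    · have h' : j < i := by omega
      rw [add_comm (X i) (X j)]
      exact key_lt j i h' hi
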